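/- arXiv:2502.02705 — 2 statements merged into one kernel-verified Lean document; each statement's English description precedes it below -/
import Mathlib

section
/- (Monotonicity of optimal H-step values under improvability) Suppose there exists for each state s an action a with E_{s'∼p(·|s,a)}[γ V_sim(s')] - V_sim(s) ≥ -r(s). Then for every H ≥ 1 and every state s, the optimal H-step value satisfies V_H^*(s) ≥ V_{H-1}^*(s), where V_H^*(s) = sup over H-step policies of E[γ^H V_sim(s_H) + ∑_{t=0}^{H-1} γ^t r(s_t) - V_sim(s₀) | s₀ = s] under transition kernel p. -/
open Finset

section MDP

variable {S A : Type} [Fintype S] [Fintype A] [DecidableEq S]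

/-- `q` is a Markov transition kernel (pmf over next states for each state-action). -/
def IsKernel (q : S → A → S → ℝ) : Prop :=
  ∀ s a, (∀ s', 0 ≤ q s a s') ∧ (∑ s', q s a s') = 1

/-- A time-dependent stochastic policy sequence. -/
def IsPolicySeq (π : ℕ → S → A → ℝ) : Prop :=
  ∀ t s, (∀ a, 0 ≤ π t s a) ∧ (∑ a, π t s a) = 1

/-- A stationary stochastic policy. -/
def IsStationaryPolicy (π : S → A → ℝ) : Prop :=
  ∀ s, (∀ a, 0 ≤ π s a) ∧ (∑ a, π s a) = 1

/-- H-step value `E[γ^H V(s_H) + ∑_{t<H} γ^t r(s_t)]` of a time-dependent policy under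
kernel `q`, with terminal value `V`. -/
noncomputable def valH (q : S → A → S → ℝ) (r : S → ℝ) (γ : ℝ) (V : S → ℝ) :
    ℕ → (ℕ → S → A → ℝ) → S → ℝ
  | 0, _, s => V s
  | H + 1, π, s =>
      r s + γ * ∑ a, π 0 s a * ∑ s', q s a s' * valH q r γ V H (fun t => π (t + 1)) s'

/-- Optimal H-step value: supremum over H-step (time-dependent stochastic) policies. -/
noncomputable def VHopt (q : S → A → S → ℝ) (r : S → ℝ) (γ : ℝ) (V : S → ℝ)
    (H : ℕ) (s : S) : ℝ :=
  sSup {x | ∃ π, IsPolicySeq π ∧ valH q r γ V H π s = x}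

/-- One step of the state-distribution dynamics induced by kernel `q` and stationary
policy `π`. -/
noncomputable def pushforward (q : S → A → S → ℝ) (π : S → A → ℝ) (μ : S → ℝ) : S → ℝ :=
  fun s' => ∑ s, μ s * ∑ a, π s a * q s a s'

/-- Distribution of the state at time `t` of the Markov chain induced by `π` from `s₀`. -/
noncomputable def stateDist (q : S → A → S → ℝ) (π : S → A → ℝ) (s0 : S) (t : ℕ) :
    S → ℝ :=
  (pushforward q π)^[t] (fun s => if s = s0 then 1 else 0)

/-- Infinite-horizon discounted value of stationary policy `π` from `s₀`. -/
noncomputable def Vinf (q : S → A → S → ℝ) (r : S → ℝ) (γ : ℝ) (π : S → A → ℝ)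
    (s0 : S) : ℝ :=
  ∑' t : ℕ, γ ^ t * ∑ s, stateDist q π s0 t s * r s

/-- Optimal infinite-horizon discounted value. -/
noncomputable def Vstar (q : S → A → S → ℝ) (r : S → ℝ) (γ : ℝ) (s0 : S) : ℝ :=
  sSup {x | ∃ π, IsStationaryPolicy π ∧ Vinf q r γ π s0 = x}

end MDP


section Helpers

variable {S A : Type} [Fintype S] [Fintype A] [DecidableEq S]

open Classical in
/-- Extend a policy: use `π` for `t < n`, then deterministic action `f`. -/
noncomputable def extPol (π : ℕ → S → A → ℝ) (f : S → A) (n : ℕ) : ℕ → S → A → ℝ :=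
  fun t s a => if t < n then π t s a else (if a = f s then 1 else 0)

lemma extPol_isPolicySeq [Nonempty A] (π : ℕ → S → A → ℝ) (hπ : IsPolicySeq π)
    (f : S → A) (n : ℕ) : IsPolicySeq (extPol π f n) := by
  classical
  intro t s
  by_cases h : t < n
  · simpa [extPol, h] using hπ t s
  · constructor
    · intro a
      simp only [extPol, h, if_false]
      split <;> norm_num
    · simp [extPol, h]

lemma convex_le {ι : Type} [Fintype ι] (w x : ι → ℝ) (C : ℝ)
    (hw : ∀ i, 0 ≤ w i) (hw1 : ∑ i, w i = 1) (hx : ∀ i, x i ≤ C) :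
    ∑ i, w i * x i ≤ C := by
  calc ∑ i, w i * x i ≤ ∑ i, w i * C := by
        apply Finset.sum_le_sum
        intro i _
        exact mul_le_mul_of_nonneg_left (hx i) (hw i)
    _ = C := by rw [← Finset.sum_mul, hw1, one_mul]

lemma valH_bdd [Nonempty S] (p : S → A → S → ℝ) (hp : IsKernel p)
    (r Vsim : S → ℝ) (γ : ℝ) (hγ0 : 0 ≤ γ) :
    ∀ n : ℕ, ∃ C : ℝ, ∀ π, IsPolicySeq π → ∀ s, valH p r γ Vsim n π s ≤ C := by
  intro n
  induction n with
  | zero =>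
    refine ⟨Finset.univ.sup' Finset.univ_nonempty Vsim, fun π _ s => ?_⟩
    exact Finset.le_sup' _ (Finset.mem_univ s)
  | succ n ih =>
    obtain ⟨C, hC⟩ := ih
    refine ⟨Finset.univ.sup' Finset.univ_nonempty r + γ * C, fun π hπ s => ?_⟩
    show r s + γ * ∑ a, π 0 s a * ∑ s', p s a s' * valH p r γ Vsim n (fun t => π (t + 1)) s'
      ≤ _
    have hshift : IsPolicySeq (fun t => π (t + 1)) := fun t s => hπ (t + 1) s
    have h1 : ∑ a, π 0 s a * ∑ s', p s a s' * valH p r γ Vsim n (fun t => π (t + 1)) s' ≤ C := by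
      apply convex_le _ _ _ (hπ 0 s).1 (hπ 0 s).2
      intro a
      exact convex_le _ _ _ (hp s a).1 (hp s a).2 (fun s' => hC _ hshift s')
    have h2 : r s ≤ Finset.univ.sup' Finset.univ_nonempty r :=
      Finset.le_sup' _ (Finset.mem_univ s)
    have h3 : γ * _ ≤ γ * C := mul_le_mul_of_nonneg_left h1 hγ0
    linarith

lemma valH_ext_ge (p : S → A → S → ℝ) (hp : IsKernel p)
    (r Vsim : S → ℝ) (γ : ℝ) (hγ0 : 0 ≤ γ) (f : S → A)
    (hf : ∀ s, (∑ s', p s (f s) s' * (γ * Vsim s')) - Vsim s ≥ -(r s)) :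
    ∀ n : ℕ, ∀ π, IsPolicySeq π → ∀ s,
      valH p r γ Vsim n π s ≤ valH p r γ Vsim (n + 1) (extPol π f n) s := by
  classical
  intro n
  induction n with
  | zero =>
    intro π hπ s
    show Vsim s ≤ r s + γ * ∑ a, (if a = f s then (1:ℝ) else 0) *
      ∑ s', p s a s' * valH p r γ Vsim 0 (fun t => extPol π f 0 (t + 1)) s'
    have hsum : ∑ a, (if a = f s then (1:ℝ) else 0) *
        ∑ s', p s a s' * valH p r γ Vsim 0 (fun t => extPol π f 0 (t + 1)) s'
        = ∑ s', p s (f s) s' * Vsim s' := by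
      rw [Finset.sum_eq_single (f s)]
      · simp [valH]
      · intro b _ hb; simp [hb]
      · intro h; exact absurd (Finset.mem_univ _) h
    rw [hsum]
    have := hf s
    have heq : ∑ s', p s (f s) s' * (γ * Vsim s') = γ * ∑ s', p s (f s) s' * Vsim s' := by
      rw [Finset.mul_sum]; congr 1; ext s'; ring
    rw [heq] at this
    linarith
  | succ n ih =>
    intro π hπ s
    have hshift : IsPolicySeq (fun t => π (t + 1)) := fun t s => hπ (t + 1) s
    show r s + γ * ∑ a, π 0 s a * ∑ s', p s a s' *
        valH p r γ Vsim n (fun t => π (t + 1)) s'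
      ≤ r s + γ * ∑ a, extPol π f (n + 1) 0 s a * ∑ s', p s a s' *
        valH p r γ Vsim (n + 1) (fun t => extPol π f (n + 1) (t + 1)) s'
    have he0 : extPol π f (n + 1) 0 = π 0 := by
      funext s a; simp [extPol]
    have he1 : (fun t => extPol π f (n + 1) (t + 1)) = extPol (fun t => π (t + 1)) f n := by
      funext t s a
      simp only [extPol, Nat.add_lt_add_iff_right]
    rw [he0, he1]
    have hmono : ∑ a, π 0 s a * ∑ s', p s a s' *
        valH p r γ Vsim n (fun t => π (t + 1)) s'
      ≤ ∑ a, π 0 s a * ∑ s', p s a s' *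
        valH p r γ Vsim (n + 1) (extPol (fun t => π (t + 1)) f n) s' := by
      apply Finset.sum_le_sum
      intro a _
      apply mul_le_mul_of_nonneg_left _ ((hπ 0 s).1 a)
      apply Finset.sum_le_sum
      intro s' _
      exact mul_le_mul_of_nonneg_left (ih _ hshift s') ((hp s a).1 s')
    nlinarith [mul_le_mul_of_nonneg_left hmono hγ0]

end Helpers

/-- Monotonicity of optimal H-step values under improvability: if `V_sim`
is improvable with respect to the MDP with kernel `p`, then the optimal H-step reshaped
values `V_H^*(s) = VHopt p r γ V_sim H s - V_sim s` are monotone: `V_H^* ≥ V_{H-1}^*`. -/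
theorem stmt_6 {S A : Type} [Fintype S] [Fintype A] [DecidableEq S]
    [Nonempty S] [Nonempty A]
    (p : S → A → S → ℝ) (hp : IsKernel p)
    (r Vsim : S → ℝ) (γ : ℝ) (hγ0 : 0 ≤ γ) (hγ1 : γ < 1)
    (himp : ∀ s, ∃ a, (∑ s', p s a s' * (γ * Vsim s')) - Vsim s ≥ -(r s)) :
    ∀ H : ℕ, 1 ≤ H → ∀ s : S,
      VHopt p r γ Vsim H s - Vsim s ≥ VHopt p r γ Vsim (H - 1) s - Vsim s := by
  classical
  intro H hH s
  obtain ⟨m, rfl⟩ : ∃ m, H = m + 1 := ⟨H - 1, (Nat.succ_pred_eq_of_pos hH).symm⟩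
  simp only [Nat.add_sub_cancel]
  apply sub_le_sub_right
  -- the improving action
  choose f hf using himp
  obtain ⟨C, hC⟩ := valH_bdd p hp r Vsim γ hγ0 (m + 1)
  have hbdd : BddAbove {x | ∃ π, IsPolicySeq π ∧ valH p r γ Vsim (m + 1) π s = x} := by
    refine ⟨C, fun x hx => ?_⟩
    obtain ⟨π, hπ, rfl⟩ := hx
    exact hC π hπ s
  -- nonempty set for m steps
  set πd : ℕ → S → A → ℝ := fun _ s a => if a = f s then 1 else 0 with hπd
  have hπdpol : IsPolicySeq πd := by
    intro t s
    constructor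
    · intro a; simp only [hπd]; split <;> norm_num
    · simp [hπd]
  refine csSup_le ⟨valH p r γ Vsim m πd s, ⟨πd, hπdpol, rfl⟩⟩ ?_
  rintro x ⟨π, hπ, rfl⟩
  calc valH p r γ Vsim m π s
      ≤ valH p r γ Vsim (m + 1) (extPol π f m) s :=
        valH_ext_ge p hp r Vsim γ hγ0 f hf m π hπ s
    _ ≤ sSup {x | ∃ π, IsPolicySeq π ∧ valH p r γ Vsim (m + 1) π s = x} :=
        le_csSup hbdd ⟨extPol π f m, extPol_isPolicySeq π hπ f m, rfl⟩
end

section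
/- (Suboptimality of approximately H-step-optimal policies) Assume: (a) V_sim is improvable with respect to the real MDP (for all s there is an action a with E_{s'∼p(·|s,a)}[γV_sim(s')] - V_sim(s) ≥ -r(s)); (b) max_s |V_sim(s) - V*(s)| < ε, where V* is the optimal infinite-horizon discounted value function of the real MDP; (c) the stationary policy π satisfies Q_H^*(s,π) - V_H^*(s) ≥ -δ for all s, where Q_H^*(s,π) = E_{a∼π(·|s), s'∼p(·|s,a)}[γ V_{H-1}^*(s') + r(s) + γV_sim(s') - V_sim(s)]. Then the infinite-horizon value of π in the real MDP satisfies V*(s) - V^π(s) ≤ γ^H ε + δ/(1-γ) for every state s. -/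
open Finset

set_option linter.unusedSectionVars false

section Helpers

variable {S A : Type} [Fintype S] [Fintype A] [DecidableEq S]

lemma avg_le {ι : Type} [Fintype ι] {w f : ι → ℝ} {c : ℝ}
    (hw : ∀ i, 0 ≤ w i) (hw1 : (∑ i, w i) = 1) (hf : ∀ i, f i ≤ c) :
    ∑ i, w i * f i ≤ c := by
  calc ∑ i, w i * f i ≤ ∑ i, w i * c :=
        Finset.sum_le_sum (fun i _ => mul_le_mul_of_nonneg_left (hf i) (hw i))
    _ = c := by rw [← Finset.sum_mul, hw1, one_mul]

lemma abs_avg_le {ι : Type} [Fintype ι] {w f : ι → ℝ} {c : ℝ}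
    (hw : ∀ i, 0 ≤ w i) (hw1 : (∑ i, w i) = 1) (hf : ∀ i, |f i| ≤ c) :
    |∑ i, w i * f i| ≤ c := by
  calc |∑ i, w i * f i| ≤ ∑ i, |w i * f i| := Finset.abs_sum_le_sum_abs _ _
    _ = ∑ i, w i * |f i| := by
        apply Finset.sum_congr rfl; intro i _; rw [abs_mul, abs_of_nonneg (hw i)]
    _ ≤ c := avg_le hw hw1 hf

lemma avg_mono {ι : Type} [Fintype ι] {w f g : ι → ℝ}
    (hw : ∀ i, 0 ≤ w i) (hfg : ∀ i, f i ≤ g i) :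
    ∑ i, w i * f i ≤ ∑ i, w i * g i :=
  Finset.sum_le_sum (fun i _ => mul_le_mul_of_nonneg_left (hfg i) (hw i))

lemma shift_policySeq {π : ℕ → S → A → ℝ} (hπ : IsPolicySeq π) :
    IsPolicySeq (fun t => π (t + 1)) := fun t s => hπ (t + 1) s

lemma const_policySeq {π : S → A → ℝ} (hπ : IsStationaryPolicy π) :
    IsPolicySeq (fun _ : ℕ => π) := fun _ s => hπ s

lemma unif_stationary [Nonempty A] :
    IsStationaryPolicy (fun (_ : S) (_ : A) => ((Fintype.card A : ℝ))⁻¹) := by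
  intro s
  constructor
  · intro a; positivity
  · rw [Finset.sum_const, Finset.card_univ, nsmul_eq_mul, mul_inv_cancel₀]
    exact Nat.cast_ne_zero.mpr Fintype.card_ne_zero

lemma valH_congr (q : S → A → S → ℝ) (r : S → ℝ) (γ : ℝ) (V : S → ℝ) :
    ∀ (k : ℕ) (π π' : ℕ → S → A → ℝ), (∀ t, t < k → π t = π' t) →
      ∀ s, valH q r γ V k π s = valH q r γ V k π' s := by
  intro k
  induction k with
  | zero => intro π π' _ s; rfl
  | succ k ih =>
      intro π π' h s
      simp only [valH]
      rw [h 0 (Nat.succ_pos k)]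
      congr 1
      congr 1
      apply Finset.sum_congr rfl; intro a _
      congr 1
      apply Finset.sum_congr rfl; intro s' _
      congr 1
      exact ih _ _ (fun t ht => h (t + 1) (Nat.succ_lt_succ ht)) s'

lemma valH_mono_V (q : S → A → S → ℝ) (hq : IsKernel q) (r : S → ℝ) (γ : ℝ)
    (hγ0 : 0 ≤ γ) {V V' : S → ℝ} (hVV : ∀ s, V s ≤ V' s) :
    ∀ (k : ℕ) (π : ℕ → S → A → ℝ), IsPolicySeq π →
      ∀ s, valH q r γ V k π s ≤ valH q r γ V' k π s := by
  intro k
  induction k with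
  | zero => intro π _ s; exact hVV s
  | succ k ih =>
      intro π hπ s
      simp only [valH]
      have h1 : ∑ a, π 0 s a * ∑ s', q s a s' * valH q r γ V k (fun t => π (t+1)) s'
          ≤ ∑ a, π 0 s a * ∑ s', q s a s' * valH q r γ V' k (fun t => π (t+1)) s' := by
        apply avg_mono (hπ 0 s).1
        intro a
        apply avg_mono (fun s' => (hq s a).1 s')
        intro s'
        exact ih _ (shift_policySeq hπ) s'
      have := mul_le_mul_of_nonneg_left h1 hγ0
      linarith

lemma valH_abs_le (q : S → A → S → ℝ) (hq : IsKernel q) (r V : S → ℝ) (γ : ℝ)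
    (hγ0 : 0 ≤ γ) (hγ1 : γ ≤ 1) {R Vb : ℝ}
    (hR : ∀ s, |r s| ≤ R) (hV : ∀ s, |V s| ≤ Vb) :
    ∀ (k : ℕ) (π : ℕ → S → A → ℝ), IsPolicySeq π →
      ∀ s, |valH q r γ V k π s| ≤ k * R + Vb := by
  intro k
  induction k with
  | zero => intro π _ s; simpa [valH] using hV s
  | succ k ih =>
      intro π hπ s
      simp only [valH]
      have hX : |∑ a, π 0 s a * ∑ s', q s a s' * valH q r γ V k (fun t => π (t+1)) s'|
          ≤ k * R + Vb := by
        apply abs_avg_le (hπ 0 s).1 (hπ 0 s).2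
        intro a
        apply abs_avg_le (fun s' => (hq s a).1 s') (hq s a).2
        intro s'
        exact ih _ (shift_policySeq hπ) s'
      have hγX : |γ * ∑ a, π 0 s a * ∑ s', q s a s' * valH q r γ V k (fun t => π (t+1)) s'|
          ≤ k * R + Vb := by
        rw [abs_mul, abs_of_nonneg hγ0]
        calc γ * |∑ a, π 0 s a * ∑ s', q s a s' * valH q r γ V k (fun t => π (t+1)) s'|
            ≤ 1 * |∑ a, π 0 s a * ∑ s', q s a s' * valH q r γ V k (fun t => π (t+1)) s'| :=
              mul_le_mul_of_nonneg_right hγ1 (abs_nonneg _)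
          _ ≤ k * R + Vb := by rw [one_mul]; exact hX
      calc |r s + γ * ∑ a, π 0 s a * ∑ s', q s a s' * valH q r γ V k (fun t => π (t+1)) s'|
          ≤ |r s| + |γ * ∑ a, π 0 s a * ∑ s', q s a s' * valH q r γ V k (fun t => π (t+1)) s'| :=
            abs_add_le _ _
        _ ≤ R + (k * R + Vb) := add_le_add (hR s) hγX
        _ = (k + 1 : ℕ) * R + Vb := by push_cast; ring

lemma valH_succ_last (q : S → A → S → ℝ) (r : S → ℝ) (γ : ℝ) (V : S → ℝ) :
    ∀ (k : ℕ) (π : ℕ → S → A → ℝ) (s : S),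
      valH q r γ V (k + 1) π s
        = valH q r γ (fun x => r x + γ * ∑ a, π k x a * ∑ s', q x a s' * V s') k π s := by
  intro k
  induction k with
  | zero => intro π s; simp [valH]
  | succ k ih =>
      intro π s
      show valH q r γ V (k + 1 + 1) π s = _
      simp only [valH]
      congr 1
      congr 1
      apply Finset.sum_congr rfl; intro a _
      congr 1
      apply Finset.sum_congr rfl; intro s' _
      congr 1
      exact ih (fun t => π (t + 1)) s'

lemma VHopt_set_nonempty [Nonempty A] (q : S → A → S → ℝ) (r : S → ℝ) (γ : ℝ)
    (V : S → ℝ) (k : ℕ) (s : S) :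
    Set.Nonempty {x | ∃ π, IsPolicySeq π ∧ valH q r γ V k π s = x} :=
  ⟨_, ⟨fun _ _ _ => ((Fintype.card A : ℝ))⁻¹, const_policySeq unif_stationary, rfl⟩⟩

lemma VHopt_set_bddAbove {q : S → A → S → ℝ} (hq : IsKernel q) {r : S → ℝ} {γ : ℝ}
    {V : S → ℝ} (hγ0 : 0 ≤ γ) (hγ1 : γ ≤ 1) (k : ℕ) (s : S) :
    BddAbove {x | ∃ π, IsPolicySeq π ∧ valH q r γ V k π s = x} := by
  refine ⟨k * (∑ x, |r x|) + (∑ x, |V x|), ?_⟩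
  rintro x ⟨π, hπ, rfl⟩
  refine le_trans (le_abs_self _) ?_
  exact valH_abs_le q hq r V γ hγ0 hγ1
    (fun y => Finset.single_le_sum (fun i _ => abs_nonneg (r i)) (Finset.mem_univ y))
    (fun y => Finset.single_le_sum (fun i _ => abs_nonneg (V i)) (Finset.mem_univ y))
    k π hπ s

lemma stateDist_zero {p : S → A → S → ℝ} {π : S → A → ℝ} (s0 : S) :
    stateDist p π s0 0 = fun s => if s = s0 then 1 else 0 := rfl

lemma stateDist_succ {p : S → A → S → ℝ} {π : S → A → ℝ} (s0 : S) (t : ℕ) :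
    stateDist p π s0 (t + 1) = pushforward p π (stateDist p π s0 t) := by
  simp only [stateDist, Function.iterate_succ_apply']

lemma stateDist_nonneg {p : S → A → S → ℝ} {π : S → A → ℝ}
    (hp : IsKernel p) (hπ : IsStationaryPolicy π) (s0 : S) :
    ∀ t s, 0 ≤ stateDist p π s0 t s := by
  intro t
  induction t with
  | zero => intro s; simp only [stateDist_zero]; split <;> norm_num
  | succ t ih =>
      intro s
      rw [stateDist_succ]
      apply Finset.sum_nonneg
      intro x _
      apply mul_nonneg (ih x)
      apply Finset.sum_nonneg
      intro a _
      exact mul_nonneg ((hπ x).1 a) ((hp x a).1 s)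

lemma stateDist_sum_one {p : S → A → S → ℝ} {π : S → A → ℝ}
    (hp : IsKernel p) (hπ : IsStationaryPolicy π) (s0 : S) :
    ∀ t, (∑ s, stateDist p π s0 t s) = 1 := by
  intro t
  induction t with
  | zero => simp [stateDist_zero]
  | succ t ih =>
      simp only [stateDist_succ, pushforward]
      rw [Finset.sum_comm]
      have h : ∀ x, ∑ s', stateDist p π s0 t x * ∑ a, π x a * p x a s'
          = stateDist p π s0 t x := by
        intro x
        rw [← Finset.mul_sum, Finset.sum_comm]
        have h2 : ∀ a, (∑ s', π x a * p x a s') = π x a := by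
          intro a; rw [← Finset.mul_sum, (hp x a).2, mul_one]
        rw [Finset.sum_congr rfl (fun a _ => h2 a), (hπ x).2, mul_one]
      rw [Finset.sum_congr rfl (fun x _ => h x), ih]

lemma sum_swap_mul {c : S → ℝ} {d : S → S → ℝ} {e : S → ℝ} :
    ∑ x, (∑ s', c s' * d s' x) * e x = ∑ s', c s' * ∑ x, d s' x * e x := by
  simp only [Finset.sum_mul, Finset.mul_sum]
  rw [Finset.sum_comm]
  apply Finset.sum_congr rfl; intro s' _
  apply Finset.sum_congr rfl; intro x _
  ring

lemma pushforward_lin {p : S → A → S → ℝ} {π : S → A → ℝ}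
    (c : S → ℝ) (μ : S → S → ℝ) (y : S) :
    pushforward p π (fun x => ∑ s', c s' * μ s' x) y
      = ∑ s', c s' * pushforward p π (μ s') y := by
  simp only [pushforward]
  exact sum_swap_mul

lemma stateDist_succ_eq {p : S → A → S → ℝ} {π : S → A → ℝ} (s : S) :
    ∀ (t : ℕ) (s'' : S), stateDist p π s (t + 1) s''
      = ∑ s', (∑ a, π s a * p s a s') * stateDist p π s' t s'' := by
  intro t
  induction t with
  | zero =>
      intro s''
      rw [stateDist_succ]
      simp only [pushforward, stateDist_zero]
      simp [ite_mul, mul_ite, mul_one, mul_zero, one_mul, zero_mul,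
        Finset.sum_ite_eq, Finset.sum_ite_eq']
  | succ t ih =>
      intro s''
      rw [stateDist_succ]
      have hfun : stateDist p π s (t + 1)
          = fun x => ∑ s', (∑ a, π s a * p s a s') * stateDist p π s' t x := by
        funext x; exact ih x
      rw [hfun, pushforward_lin]
      apply Finset.sum_congr rfl; intro s' _
      rw [← stateDist_succ]

lemma vinf_summable {p : S → A → S → ℝ} {π : S → A → ℝ} {r : S → ℝ} {γ : ℝ}
    (hp : IsKernel p) (hπ : IsStationaryPolicy π)
    (hγ0 : 0 ≤ γ) (hγ1 : γ < 1) (s0 : S) :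
    Summable (fun t => γ ^ t * ∑ x, stateDist p π s0 t x * r x) := by
  apply Summable.of_norm_bounded (g := fun t => (∑ x, |r x|) * γ ^ t)
    (Summable.mul_left _ (summable_geometric_of_lt_one hγ0 hγ1))
  intro t
  rw [Real.norm_eq_abs, abs_mul, abs_pow, abs_of_nonneg hγ0, mul_comm]
  apply mul_le_mul_of_nonneg_right _ (pow_nonneg hγ0 t)
  exact abs_avg_le (stateDist_nonneg hp hπ s0 t) (stateDist_sum_one hp hπ s0 t)
    (fun x => Finset.single_le_sum (fun i _ => abs_nonneg (r i)) (Finset.mem_univ x))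

lemma Vinf_le_bound {p : S → A → S → ℝ} {π : S → A → ℝ} {r : S → ℝ} {γ : ℝ}
    (hp : IsKernel p) (hπ : IsStationaryPolicy π)
    (hγ0 : 0 ≤ γ) (hγ1 : γ < 1) (s0 : S) :
    Vinf p r γ π s0 ≤ (∑ x, |r x|) / (1 - γ) := by
  have hsum := vinf_summable (r := r) hp hπ hγ0 hγ1 s0
  have hg : Summable (fun t : ℕ => (∑ x, |r x|) * γ ^ t) :=
    Summable.mul_left _ (summable_geometric_of_lt_one hγ0 hγ1)
  have hle : ∀ t : ℕ, γ ^ t * ∑ x, stateDist p π s0 t x * r x ≤ (∑ x, |r x|) * γ ^ t := by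
    intro t
    rw [mul_comm]
    apply mul_le_mul_of_nonneg_right _ (pow_nonneg hγ0 t)
    refine le_trans (le_abs_self _) ?_
    exact abs_avg_le (stateDist_nonneg hp hπ s0 t) (stateDist_sum_one hp hπ s0 t)
      (fun x => Finset.single_le_sum (fun i _ => abs_nonneg (r i)) (Finset.mem_univ x))
  calc Vinf p r γ π s0 ≤ ∑' t : ℕ, (∑ x, |r x|) * γ ^ t := Summable.tsum_le_tsum hle hsum hg
    _ = (∑ x, |r x|) * (1 - γ)⁻¹ := by
        rw [tsum_mul_left, tsum_geometric_of_lt_one hγ0 hγ1]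
    _ = (∑ x, |r x|) / (1 - γ) := by rw [div_eq_mul_inv]

lemma Vinf_bellman {p : S → A → S → ℝ} {π : S → A → ℝ} {r : S → ℝ} {γ : ℝ}
    (hp : IsKernel p) (hπ : IsStationaryPolicy π)
    (hγ0 : 0 ≤ γ) (hγ1 : γ < 1) (s : S) :
    Vinf p r γ π s = r s + γ * ∑ a, π s a * ∑ s', p s a s' * Vinf p r γ π s' := by
  have hsum := vinf_summable (r := r) hp hπ hγ0 hγ1 s
  rw [Vinf, Summable.tsum_eq_zero_add hsum]
  congr 1
  · simp [stateDist_zero, ite_mul, one_mul, zero_mul, Finset.sum_ite_eq']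
  have h1 : ∀ t : ℕ, γ ^ (t + 1) * ∑ x, stateDist p π s (t + 1) x * r x
      = ∑ s', (∑ a, π s a * p s a s') *
          (γ * (γ ^ t * ∑ x, stateDist p π s' t x * r x)) := by
    intro t
    have h0 : (∑ x, stateDist p π s (t + 1) x * r x)
        = ∑ s', (∑ a, π s a * p s a s') * ∑ x, stateDist p π s' t x * r x := by
      calc ∑ x, stateDist p π s (t + 1) x * r x
          = ∑ x, (∑ s', (∑ a, π s a * p s a s') * stateDist p π s' t x) * r x :=
            Finset.sum_congr rfl (fun x _ => by rw [stateDist_succ_eq])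
        _ = _ := sum_swap_mul
    rw [h0, Finset.mul_sum]
    apply Finset.sum_congr rfl; intro s' _
    ring
  rw [tsum_congr h1, Summable.tsum_finsetSum (fun s' _ =>
    Summable.mul_left _ (Summable.mul_left _ (vinf_summable hp hπ hγ0 hγ1 s')))]
  have h2 : ∀ s', (∑' t : ℕ, (∑ a, π s a * p s a s') *
      (γ * (γ ^ t * ∑ x, stateDist p π s' t x * r x)))
      = (∑ a, π s a * p s a s') * (γ * Vinf p r γ π s') := by
    intro s'
    rw [tsum_mul_left, tsum_mul_left]
    rfl
  rw [Finset.sum_congr rfl (fun s' _ => h2 s')]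
  simp only [Finset.sum_mul, Finset.mul_sum]
  conv_lhs => rw [Finset.sum_comm]
  apply Finset.sum_congr rfl; intro a _
  apply Finset.sum_congr rfl; intro s' _
  ring

lemma VHopt_mono [Nonempty A] (p : S → A → S → ℝ) (hp : IsKernel p)
    (r Vsim : S → ℝ) (γ : ℝ) (hγ0 : 0 ≤ γ) (hγ1 : γ ≤ 1)
    (himp : ∀ s, ∃ a, (∑ s', p s a s' * (γ * Vsim s')) - Vsim s ≥ -(r s))
    (k : ℕ) (s : S) :
    VHopt p r γ Vsim k s ≤ VHopt p r γ Vsim (k + 1) s := by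
  classical
  choose g hg using himp
  apply csSup_le (VHopt_set_nonempty p r γ Vsim k s)
  rintro x ⟨π, hπ, rfl⟩
  set π' : ℕ → S → A → ℝ :=
    fun t => if t = k then (fun x a => if a = g x then 1 else 0) else π t with hπ'def
  have hπ' : IsPolicySeq π' := by
    intro t s'
    by_cases h : t = k
    · simp only [hπ'def, h, if_pos rfl]
      constructor
      · intro a; by_cases h2 : a = g s' <;> simp [h2]
      · simp [Finset.sum_ite_eq']
    · simp only [hπ'def, if_neg h]; exact hπ t s'
  have hW : ∀ x, Vsim x ≤ r x + γ * ∑ a, π' k x a * ∑ s', p x a s' * Vsim s' := by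
    intro x
    have h1 : (∑ a, π' k x a * ∑ s', p x a s' * Vsim s')
        = ∑ s', p x (g x) s' * Vsim s' := by
      simp [hπ'def, ite_mul, one_mul, zero_mul, Finset.sum_ite_eq']
    rw [h1]
    have h2 : (∑ s', p x (g x) s' * (γ * Vsim s')) = γ * ∑ s', p x (g x) s' * Vsim s' := by
      rw [Finset.mul_sum]; apply Finset.sum_congr rfl; intros; ring
    have h3 := hg x
    rw [h2] at h3
    linarith
  have key : valH p r γ Vsim k π s ≤ valH p r γ Vsim (k + 1) π' s := by
    rw [valH_succ_last]
    calc valH p r γ Vsim k π s = valH p r γ Vsim k π' s := by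
          apply valH_congr
          intro t ht
          simp [hπ'def, Nat.ne_of_lt ht]
      _ ≤ _ := valH_mono_V p hp r γ hγ0 hW k π' hπ' s
  exact key.trans (le_csSup (VHopt_set_bddAbove hp hγ0 hγ1 (k + 1) s) ⟨π', hπ', rfl⟩)

end Helpers


/-- Suboptimality of approximately H-step-optimal policies: if `V_sim` is
improvable, `‖V_sim - V*‖_∞ < ε`, and the stationary policy `π` is `δ`-optimal for the
H-step reshaped objective (`Q_H^*(s,π) ≥ V_H^*(s) - δ` for all `s`), then
`V*(s) - V^π(s) ≤ γ^H ε + δ/(1-γ)` for all `s`.  Here the reshaped optimal values are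
`V_H^*(s) = VHopt p r γ V_sim H s - V_sim s` and
`Q_H^*(s,π) = E_{a∼π(·|s), s'∼p(·|s,a)}[γ V_{H-1}^*(s') + r(s) + γ V_sim(s') - V_sim(s)]`. -/
theorem stmt_7 {S A : Type} [Fintype S] [Fintype A] [DecidableEq S]
    [Nonempty S] [Nonempty A]
    (p : S → A → S → ℝ) (hp : IsKernel p)
    (r Vsim : S → ℝ) (γ : ℝ) (hγ0 : 0 ≤ γ) (hγ1 : γ < 1)
    (himp : ∀ s, ∃ a, (∑ s', p s a s' * (γ * Vsim s')) - Vsim s ≥ -(r s))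
    (ε : ℝ) (hε : ∀ s, |Vsim s - Vstar p r γ s| < ε)
    (H : ℕ) (hH : 1 ≤ H)
    (π : S → A → ℝ) (hπ : IsStationaryPolicy π) (δ : ℝ) (hδ : 0 ≤ δ)
    (hQ : ∀ s : S,
      (∑ a, π s a * ∑ s', p s a s' *
          (γ * (VHopt p r γ Vsim (H - 1) s' - Vsim s')
            + (r s + γ * Vsim s' - Vsim s)))
        ≥ (VHopt p r γ Vsim H s - Vsim s) - δ) :
    ∀ s : S, Vstar p r γ s - Vinf p r γ π s ≤ γ ^ H * ε + δ / (1 - γ) := by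
  classical
  have hγle : γ ≤ 1 := le_of_lt hγ1
  have h1γ : 0 < 1 - γ := by linarith
  have hbdd : ∀ (k : ℕ) (s : S),
      BddAbove {x | ∃ π', IsPolicySeq π' ∧ valH p r γ Vsim k π' s = x} :=
    fun k s => VHopt_set_bddAbove hp hγ0 hγle k s
  have hVstarBdd : ∀ s0 : S,
      BddAbove {x | ∃ π', IsStationaryPolicy π' ∧ Vinf p r γ π' s0 = x} := by
    intro s0
    refine ⟨(∑ x, |r x|) / (1 - γ), ?_⟩
    rintro x ⟨π', hπ', rfl⟩
    exact Vinf_le_bound hp hπ' hγ0 hγ1 s0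
  have hVle : ∀ (π' : S → A → ℝ), IsStationaryPolicy π' → ∀ s0 : S,
      Vinf p r γ π' s0 ≤ Vstar p r γ s0 :=
    fun π' hπ' s0 => le_csSup (hVstarBdd s0) ⟨π', hπ', rfl⟩
  have hmono : ∀ s : S, VHopt p r γ Vsim (H - 1) s ≤ VHopt p r γ Vsim H s := by
    intro s
    have h := VHopt_mono p hp r Vsim γ hγ0 hγle himp (H - 1) s
    rwa [Nat.sub_add_cancel hH] at h
  -- Step A: approximate Bellman inequality for W := VHopt H
  have hstar : ∀ s0 : S, VHopt p r γ Vsim H s0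
      ≤ r s0 + γ * (∑ a, π s0 a * ∑ s', p s0 a s' * VHopt p r γ Vsim H s') + δ := by
    intro s0
    have h := hQ s0
    have hsimp : (∑ a, π s0 a * ∑ s', p s0 a s' *
          (γ * (VHopt p r γ Vsim (H - 1) s' - Vsim s') + (r s0 + γ * Vsim s' - Vsim s0)))
        = γ * (∑ a, π s0 a * ∑ s', p s0 a s' * VHopt p r γ Vsim (H - 1) s')
          + (r s0 - Vsim s0) := by
      have inner : ∀ a, (∑ s', p s0 a s' *
            (γ * (VHopt p r γ Vsim (H - 1) s' - Vsim s') + (r s0 + γ * Vsim s' - Vsim s0)))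
          = γ * (∑ s', p s0 a s' * VHopt p r γ Vsim (H - 1) s') + (r s0 - Vsim s0) := by
        intro a
        calc (∑ s', p s0 a s' *
              (γ * (VHopt p r γ Vsim (H - 1) s' - Vsim s') + (r s0 + γ * Vsim s' - Vsim s0)))
            = ∑ s', (γ * (p s0 a s' * VHopt p r γ Vsim (H - 1) s')
                + p s0 a s' * (r s0 - Vsim s0)) := by
              apply Finset.sum_congr rfl; intros; ring
          _ = γ * (∑ s', p s0 a s' * VHopt p r γ Vsim (H - 1) s')
                + (∑ s', p s0 a s') * (r s0 - Vsim s0) := by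
              rw [Finset.sum_add_distrib, ← Finset.mul_sum, ← Finset.sum_mul]
          _ = _ := by rw [(hp s0 a).2, one_mul]
      calc (∑ a, π s0 a * ∑ s', p s0 a s' *
            (γ * (VHopt p r γ Vsim (H - 1) s' - Vsim s') + (r s0 + γ * Vsim s' - Vsim s0)))
          = ∑ a, π s0 a * (γ * (∑ s', p s0 a s' * VHopt p r γ Vsim (H - 1) s')
              + (r s0 - Vsim s0)) :=
            Finset.sum_congr rfl (fun a _ => by rw [inner a])
        _ = ∑ a, (γ * (π s0 a * ∑ s', p s0 a s' * VHopt p r γ Vsim (H - 1) s')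
              + π s0 a * (r s0 - Vsim s0)) := by
            apply Finset.sum_congr rfl; intros; ring
        _ = γ * (∑ a, π s0 a * ∑ s', p s0 a s' * VHopt p r γ Vsim (H - 1) s')
              + (∑ a, π s0 a) * (r s0 - Vsim s0) := by
            rw [Finset.sum_add_distrib, ← Finset.mul_sum, ← Finset.sum_mul]
        _ = _ := by rw [(hπ s0).2, one_mul]
    rw [hsimp] at h
    have hT : (∑ a, π s0 a * ∑ s', p s0 a s' * VHopt p r γ Vsim (H - 1) s')
        ≤ (∑ a, π s0 a * ∑ s', p s0 a s' * VHopt p r γ Vsim H s') := by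
      apply avg_mono (hπ s0).1; intro a
      apply avg_mono (fun s' => (hp s0 a).1 s'); intro s'
      exact hmono s'
    have hT2 := mul_le_mul_of_nonneg_left hT hγ0
    linarith
  -- Step C: W - V^π ≤ δ/(1-γ)
  have hune : (Finset.univ : Finset S).Nonempty := Finset.univ_nonempty
  have hD : ∀ s0 : S, VHopt p r γ Vsim H s0 - Vinf p r γ π s0 ≤ δ / (1 - γ) := by
    set D := Finset.univ.sup' hune
      (fun s0 => VHopt p r γ Vsim H s0 - Vinf p r γ π s0) with hDdef
    have hDle : ∀ s0 : S, VHopt p r γ Vsim H s0 - Vinf p r γ π s0 ≤ D :=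
      fun s0 => Finset.le_sup'
        (fun s0 => VHopt p r γ Vsim H s0 - Vinf p r γ π s0) (Finset.mem_univ s0)
    have hstep : ∀ s0 : S, VHopt p r γ Vsim H s0 - Vinf p r γ π s0 ≤ δ + γ * D := by
      intro s0
      have hb := Vinf_bellman (r := r) hp hπ hγ0 hγ1 s0
      have hdiff : (∑ a, π s0 a * ∑ s', p s0 a s' * VHopt p r γ Vsim H s')
            - (∑ a, π s0 a * ∑ s', p s0 a s' * Vinf p r γ π s')
          = ∑ a, π s0 a * ∑ s', p s0 a s'
              * (VHopt p r γ Vsim H s' - Vinf p r γ π s') := by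
        rw [← Finset.sum_sub_distrib]
        apply Finset.sum_congr rfl; intro a _
        rw [← mul_sub, ← Finset.sum_sub_distrib]
        congr 1; apply Finset.sum_congr rfl; intros; ring
      have hDb : ∑ a, π s0 a * ∑ s', p s0 a s'
            * (VHopt p r γ Vsim H s' - Vinf p r γ π s') ≤ D := by
        apply avg_le (hπ s0).1 (hπ s0).2; intro a
        apply avg_le (fun s' => (hp s0 a).1 s') (hp s0 a).2; intro s'
        exact hDle s'
      rw [← hdiff] at hDb
      have h2 := mul_le_mul_of_nonneg_left hDb hγ0
      rw [mul_sub] at h2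
      have h1 := hstar s0
      linarith
    obtain ⟨s1, -, hs1⟩ := Finset.exists_mem_eq_sup' hune
      (fun s0 => VHopt p r γ Vsim H s0 - Vinf p r γ π s0)
    have hDδ : D ≤ δ / (1 - γ) := by
      have h4 : D ≤ δ + γ * D := by
        nth_rewrite 1 [hDdef]
        rw [hs1]
        exact hstep s1
      rw [le_div_iff₀ h1γ]
      nlinarith
    exact fun s0 => le_trans (hDle s0) hDδ
  -- Step D: Vstar ≤ W + γ^H ε
  have hstarW : ∀ s0 : S, Vstar p r γ s0 ≤ VHopt p r γ Vsim H s0 + γ ^ H * ε := by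
    intro s0
    show sSup {x | ∃ π', IsStationaryPolicy π' ∧ Vinf p r γ π' s0 = x} ≤ _
    refine csSup_le ⟨Vinf p r γ (fun (_ : S) (_ : A) => ((Fintype.card A : ℝ))⁻¹) s0,
      ⟨fun _ _ => ((Fintype.card A : ℝ))⁻¹, unif_stationary, rfl⟩⟩ ?_
    rintro x ⟨π'', hπ'', rfl⟩
    have hE : ∀ k : ℕ, ∀ y : S,
        Vinf p r γ π'' y - valH p r γ Vsim k (fun _ => π'') y ≤ γ ^ k * ε := by
      intro k
      induction k with
      | zero =>
          intro y
          have h1 := hVle π'' hπ'' y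
          have h2 := (abs_lt.mp (hε y)).1
          simp only [valH, pow_zero, one_mul]
          linarith
      | succ k ih =>
          intro y
          have hb := Vinf_bellman (r := r) hp hπ'' hγ0 hγ1 y
          have hunfold : valH p r γ Vsim (k + 1) (fun _ => π'') y
              = r y + γ * ∑ a, π'' y a * ∑ s', p y a s'
                  * valH p r γ Vsim k (fun _ => π'') s' := by
            simp only [valH]
          have hdiff : (∑ a, π'' y a * ∑ s', p y a s' * Vinf p r γ π'' s')
                - (∑ a, π'' y a * ∑ s', p y a s' * valH p r γ Vsim k (fun _ => π'') s')
              = ∑ a, π'' y a * ∑ s', p y a s'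
                  * (Vinf p r γ π'' s' - valH p r γ Vsim k (fun _ => π'') s') := by
            rw [← Finset.sum_sub_distrib]
            apply Finset.sum_congr rfl; intro a _
            rw [← mul_sub, ← Finset.sum_sub_distrib]
            congr 1; apply Finset.sum_congr rfl; intros; ring
          have hbound : ∑ a, π'' y a * ∑ s', p y a s'
              * (Vinf p r γ π'' s' - valH p r γ Vsim k (fun _ => π'') s') ≤ γ ^ k * ε := by
            apply avg_le (hπ'' y).1 (hπ'' y).2; intro a
            apply avg_le (fun s' => (hp y a).1 s') (hp y a).2; intro s'
            exact ih s'
          rw [← hdiff] at hbound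
          have h5 := mul_le_mul_of_nonneg_left hbound hγ0
          rw [mul_sub] at h5
          rw [hb, hunfold]
          have h6 : γ * (γ ^ k * ε) = γ ^ (k + 1) * ε := by ring
          linarith
    have h6 := hE H s0
    have h7 : valH p r γ Vsim H (fun _ => π'') s0 ≤ VHopt p r γ Vsim H s0 :=
      le_csSup (hbdd H s0) ⟨_, const_policySeq hπ'', rfl⟩
    linarith
  intro s
  have h8 := hstarW s
  have h9 := hD s
  linarith
end
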